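/- Let h : ℝ → ℝ be C¹ and let Φ : ℝ → ℝ be positive, C¹ on an open interval I with h(x) ≠ Φ(x)² on I, and suppose Φ solves the geodesic equation Φ'' = (3Φ² + h)/(Φ² − h)·(Φ')²/Φ − h'Φ'/(Φ² − h) + (Φ⁴ − h²)/Φ on I. Then Θ_top(x) = Φ(x)·(Φ'(x) − √((h(x)−Φ(x)²)² + Φ'(x)²))/(h(x)−Φ(x)²) satisfies the Riccati equation Θ'(x) + Θ(x)² + h(x) = 0 on I. -/

import Mathlib

set_option maxHeartbeats 1000000

theorem stmt_2 (h Φ : ℝ → ℝ) (a b : ℝ)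
    (hh : ContDiff ℝ 1 h)
    (hΦ1 : ∀ x ∈ Set.Ioo a b, DifferentiableAt ℝ Φ x)
    (hΦ2 : ∀ x ∈ Set.Ioo a b, DifferentiableAt ℝ (deriv Φ) x)
    (hΦpos : ∀ x ∈ Set.Ioo a b, 0 < Φ x)
    (hne : ∀ x ∈ Set.Ioo a b, h x ≠ (Φ x) ^ 2)
    (hgeo : ∀ x ∈ Set.Ioo a b,
      deriv (deriv Φ) x =
        (3 * (Φ x) ^ 2 + h x) / ((Φ x) ^ 2 - h x) * (deriv Φ x) ^ 2 / Φ x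
          - deriv h x * deriv Φ x / ((Φ x) ^ 2 - h x)
          + ((Φ x) ^ 4 - (h x) ^ 2) / Φ x) :
    ∀ x ∈ Set.Ioo a b,
      deriv (fun y => Φ y * (deriv Φ y - Real.sqrt ((h y - (Φ y) ^ 2) ^ 2 + (deriv Φ y) ^ 2))
          / (h y - (Φ y) ^ 2)) x
        + (Φ x * (deriv Φ x - Real.sqrt ((h x - (Φ x) ^ 2) ^ 2 + (deriv Φ x) ^ 2))
          / (h x - (Φ x) ^ 2)) ^ 2
        + h x = 0 := by
  intro x hx
  have hPpos := hΦpos x hx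
  have hPne : Φ x ≠ 0 := ne_of_gt hPpos
  have hu : h x - Φ x ^ 2 ≠ 0 := sub_ne_zero.mpr (hne x hx)
  have hu' : Φ x ^ 2 - h x ≠ 0 := sub_ne_zero.mpr (Ne.symm (hne x hx))
  have hpos : 0 < (h x - Φ x ^ 2) ^ 2 + (deriv Φ x) ^ 2 := by positivity
  have hSpos : 0 < Real.sqrt ((h x - Φ x ^ 2) ^ 2 + (deriv Φ x) ^ 2) := Real.sqrt_pos.mpr hpos
  have hS2 : Real.sqrt ((h x - Φ x ^ 2) ^ 2 + (deriv Φ x) ^ 2) ^ 2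
      = (h x - Φ x ^ 2) ^ 2 + (deriv Φ x) ^ 2 := Real.sq_sqrt hpos.le
  have hΦd : HasDerivAt Φ (deriv Φ x) x := (hΦ1 x hx).hasDerivAt
  have hvd : HasDerivAt (deriv Φ) (deriv (deriv Φ) x) x := (hΦ2 x hx).hasDerivAt
  have hhd : HasDerivAt h (deriv h x) x := ((hh.differentiable one_ne_zero) x).hasDerivAt
  have hud : HasDerivAt (fun y => h y - Φ y ^ 2)
      (deriv h x - (2 : ℕ) * Φ x ^ 1 * deriv Φ x) x := hhd.sub (hΦd.pow 2)
  have hgd := (hud.pow 2).add (hvd.pow 2)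
  have hsq := hgd.sqrt (ne_of_gt hpos)
  have hnum := hΦd.mul (hvd.sub hsq)
  have hD := hnum.div hud hu
  rw [HasDerivAt.deriv (f := fun y => Φ y * (deriv Φ y - Real.sqrt ((h y - (Φ y) ^ 2) ^ 2 + (deriv Φ y) ^ 2))
      / (h y - (Φ y) ^ 2)) hD, hgeo x hx]
  simp only [Pi.mul_apply, Pi.sub_apply, Pi.add_apply, Pi.pow_apply]
  set S := Real.sqrt ((h x - Φ x ^ 2) ^ 2 + (deriv Φ x) ^ 2) with hSdef
  set P := Φ x
  set v := deriv Φ x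
  set H := h x
  set Hp := deriv h x
  have hSne : S ≠ 0 := ne_of_gt hSpos
  field_simp
  linear_combination (2 * v * H ^ 2 - 6 * P ^ 4 * v + 2 * P ^ 3 * Hp - 2 * P * H * Hp + 4 * P ^ 2 * v * H + 2 * S * P ^ 4 - 2 * S * P ^ 2 * H) * hS2
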